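/- Let τ₁ and τ₂ be distinct NNI-adjacent binary hierarchies over a finite index set J. Then there exist pairwise disjoint clusters A, B, C ∈ C(τ₁) ∩ C(τ₂) such that C(τ₁) \ C(τ₂) = {A ∪ B} and C(τ₂) \ C(τ₁) = {B ∪ C}; moreover, the ordered triple (A, B, C) with these properties is unique. -/

import Mathlib

open Finset

/-- A binary hierarchy over a finite index set `J`, encoded by its cluster set:
a laminar family of nonempty subsets of `J` containing the root `J` and all
singletons, in which every nonsingleton member is the disjoint union of exactly
two members (its children). -/
structure BinaryHierarchy (J : Type*) [DecidableEq J] [Fintype J] where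
  clusters : Finset (Finset J)
  root_mem : (Finset.univ : Finset J) ∈ clusters
  singleton_mem : ∀ j : J, ({j} : Finset J) ∈ clusters
  nonempty_of_mem : ∀ I ∈ clusters, I.Nonempty
  laminar : ∀ I ∈ clusters, ∀ K ∈ clusters, I ⊆ K ∨ K ⊆ I ∨ Disjoint I K
  binary_split : ∀ I ∈ clusters, 1 < I.card →
    ∃ L ∈ clusters, ∃ R ∈ clusters, Disjoint L R ∧ L ∪ R = I

variable {J : Type*} [DecidableEq J] [Fintype J]

/-- The parent of a cluster `I`: the smallest member of the (laminar) family strictly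
containing `I`, realized as the intersection of all members strictly containing `I`
(these form a chain in a laminar family). -/
def BinaryHierarchy.parent (τ : BinaryHierarchy J) (I : Finset J) : Finset J :=
  (τ.clusters.filter fun K => I ⊂ K).inf id

/-- The sibling (local complement) of a cluster `I`. -/
def BinaryHierarchy.sibling (τ : BinaryHierarchy J) (I : Finset J) : Finset J :=
  τ.parent I \ I

/-- A nearest neighbor interchange move from `τ` to `τ'`: there is a cluster `A ∈ C(τ)`
whose parent `P = Pr(A,τ)` is not the root, with `B := P \ A` and `C := Pr(P,τ) \ P`,
such that `C(τ') = (C(τ) \ {A ∪ B}) ∪ {B ∪ C}`. -/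
def NNIMove (τ τ' : BinaryHierarchy J) : Prop :=
  ∃ A ∈ τ.clusters, τ.parent A ≠ Finset.univ ∧
    τ'.clusters =
      (τ.clusters \ {A ∪ (τ.parent A \ A)}) ∪
        {(τ.parent A \ A) ∪ (τ.parent (τ.parent A) \ τ.parent A)}

/-- Two binary hierarchies are NNI-adjacent if one is obtained from the other by a
single nearest neighbor interchange. -/
def NNIAdjacent (τ τ' : BinaryHierarchy J) : Prop := NNIMove τ τ' ∨ NNIMove τ' τ

namespace BinaryHierarchy

variable (τ : BinaryHierarchy J)

lemma parent_spec {A : Finset J} (hA : A ∈ τ.clusters) (hAne : A ≠ Finset.univ) :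
    τ.parent A ∈ τ.clusters ∧ A ⊂ τ.parent A ∧
      ∀ K ∈ τ.clusters, A ⊂ K → τ.parent A ⊆ K := by
  have hAnon := τ.nonempty_of_mem A hA
  set S := τ.clusters.filter fun K => A ⊂ K with hS
  have hmemS : ∀ K, K ∈ S ↔ K ∈ τ.clusters ∧ A ⊂ K := by
    intro K; simp [hS]
  have huniv : (Finset.univ : Finset J) ∈ S :=
    (hmemS _).mpr ⟨τ.root_mem, Finset.ssubset_univ_iff.mpr hAne⟩
  obtain ⟨M, hM, hmin⟩ := S.exists_minimal ⟨_, huniv⟩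
  obtain ⟨hMc, hAM⟩ := (hmemS M).mp hM
  have hMle : ∀ K ∈ S, M ⊆ K := by
    intro K hK
    obtain ⟨hKc, hAK⟩ := (hmemS K).mp hK
    rcases τ.laminar M hMc K hKc with h | h | h
    · exact h
    · rcases eq_or_lt_of_le h with h' | h'
      · exact h'.ge
      · exact absurd h' (not_lt_of_ge (hmin hK h'.le))
    · exact absurd (Finset.disjoint_iff_inter_eq_empty.mp h)
        (hAnon.mono (Finset.subset_inter hAM.subset hAK.subset)).ne_empty
  have hpar : τ.parent A = M := by
    refine le_antisymm (Finset.inf_le hM) (Finset.le_inf fun K hK => hMle K hK)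
  exact ⟨hpar ▸ hMc, hpar ▸ hAM, fun K hKc hAK => hpar ▸ hMle K ((hmemS K).mpr ⟨hKc, hAK⟩)⟩

lemma parent_univ : τ.parent (Finset.univ : Finset J) = Finset.univ := by
  have : τ.clusters.filter (fun K => (Finset.univ : Finset J) ⊂ K) = ∅ := by
    apply Finset.filter_eq_empty_iff.mpr
    intro K _ h
    exact absurd (Finset.subset_univ K) h.not_subset
  simp [BinaryHierarchy.parent, this, Finset.top_eq_univ]

lemma sibling_mem {A : Finset J} (hA : A ∈ τ.clusters) (hAne : A ≠ Finset.univ) :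
    τ.parent A \ A ∈ τ.clusters := by
  obtain ⟨hPc, hAP, hPmin⟩ := τ.parent_spec hA hAne
  set P := τ.parent A with hP
  have hAnon := τ.nonempty_of_mem A hA
  have hcard : 1 < P.card :=
    lt_of_le_of_lt (Finset.card_pos.mpr hAnon) (Finset.card_lt_card hAP)
  obtain ⟨L, hLc, R, hRc, hLR, hLRP⟩ := τ.binary_split P hPc hcard
  have hLnon := τ.nonempty_of_mem L hLc
  have hRnon := τ.nonempty_of_mem R hRc
  -- key: if A meets L then A = L (symmetric in L, R)
  have key : ∀ L' R', L' ∈ τ.clusters → R' ∈ τ.clusters → Disjoint L' R' →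
      L' ∪ R' = P → (A ∩ L').Nonempty → A = L' := by
    intro L' R' hL'c hR'c hd hun hmeet
    have hL'non := τ.nonempty_of_mem L' hL'c
    have hR'non := τ.nonempty_of_mem R' hR'c
    have hL'P : L' ⊂ P := by
      rw [← hun]
      refine Finset.ssubset_iff_of_subset Finset.subset_union_left |>.mpr ?_
      obtain ⟨x, hx⟩ := hR'non
      exact ⟨x, Finset.mem_union_right _ hx, fun hxL => Finset.disjoint_left.mp hd hxL hx⟩
    rcases τ.laminar A hA L' hL'c with h | h | h
    · rcases eq_or_lt_of_le h with h' | h'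
      · exact h'
      · exact absurd (hPmin L' hL'c h') hL'P.not_subset
    · -- L' ⊆ A; show A disjoint from R', hence A ⊆ L', hence A = L'
      have hAR : Disjoint A R' := by
        rcases τ.laminar A hA R' hR'c with h2 | h2 | h2
        · exact absurd (Finset.disjoint_iff_inter_eq_empty.mp hd)
            (hL'non.mono (Finset.subset_inter le_rfl (h.trans h2))).ne_empty
        · exact absurd (hun ▸ Finset.union_subset h h2) hAP.not_subset
        · exact h2
      have : A ⊆ L' := by
        intro x hx
        rcases Finset.mem_union.mp (hun ▸ hAP.subset hx) with h3 | h3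
        · exact h3
        · exact absurd h3 (Finset.disjoint_left.mp hAR hx)
      exact le_antisymm this h
    · exact absurd (Finset.disjoint_iff_inter_eq_empty.mp h) hmeet.ne_empty
  obtain ⟨x, hx⟩ := hAnon
  rcases Finset.mem_union.mp (hLRP ▸ hAP.subset hx) with hxL | hxR
  · have hAL : A = L := key L R hLc hRc hLR hLRP ⟨x, Finset.mem_inter.mpr ⟨hx, hxL⟩⟩
    have : P \ A = R := by
      rw [hAL, ← hLRP, Finset.union_sdiff_cancel_left hLR]
    rw [this]; exact hRc
  · have hAR : A = R := key R L hRc hLc hLR.symm (Finset.union_comm L R ▸ hLRP)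
      ⟨x, Finset.mem_inter.mpr ⟨hx, hxR⟩⟩
    have : P \ A = L := by
      rw [hAR, ← hLRP, Finset.union_sdiff_cancel_right hLR]
    rw [this]; exact hLc

end BinaryHierarchy

lemma inter_eq_middle {A B C : Finset J} (hAB : Disjoint A B) (hAC : Disjoint A C)
    (hBC : Disjoint B C) : (A ∪ B) ∩ (B ∪ C) = B := by
  ext x
  simp only [Finset.mem_inter, Finset.mem_union]
  constructor
  · rintro ⟨hab, hbc⟩
    rcases hab with h | h
    · rcases hbc with h2 | h2
      · exact h2
      · exact absurd h2 (Finset.disjoint_left.mp hAC h)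
    · exact h
  · intro h; exact ⟨Or.inr h, Or.inl h⟩

lemma nni_move_triplet {τ τ' : BinaryHierarchy J} (h : NNIMove τ τ') :
    ∃ A B C : Finset J, Disjoint A B ∧ Disjoint A C ∧ Disjoint B C ∧
      A ∈ τ.clusters ∧ A ∈ τ'.clusters ∧ B ∈ τ.clusters ∧ B ∈ τ'.clusters ∧
      C ∈ τ.clusters ∧ C ∈ τ'.clusters ∧
      τ.clusters \ τ'.clusters = {A ∪ B} ∧ τ'.clusters \ τ.clusters = {B ∪ C} := by
  obtain ⟨A, hA, hPne, heq⟩ := h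
  have hAne : A ≠ Finset.univ := by
    rintro rfl
    exact hPne (τ.parent_univ)
  obtain ⟨hPc, hAP, hPmin⟩ := τ.parent_spec hA hAne
  set P := τ.parent A with hPdef
  obtain ⟨hGc, hPG, hGmin⟩ := τ.parent_spec hPc hPne
  set G := τ.parent P with hGdef
  set B := P \ A with hBdef
  set C := G \ P with hCdef
  have hBc : B ∈ τ.clusters := τ.sibling_mem hA hAne
  have hCc : C ∈ τ.clusters := τ.sibling_mem hPc hPne
  have hAB : Disjoint A B := Finset.disjoint_sdiff
  have hCP : Disjoint C P := Finset.sdiff_disjoint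
  have hBP : B ⊆ P := Finset.sdiff_subset
  have hAC : Disjoint A C := (hCP.mono_right hAP.subset).symm
  have hBC : Disjoint B C := (hCP.mono_right hBP).symm
  have hAunB : A ∪ B = P := Finset.union_sdiff_of_subset hAP.subset
  have hAnon := τ.nonempty_of_mem A hA
  have hBnon := τ.nonempty_of_mem B hBc
  have hCnon := τ.nonempty_of_mem C hCc
  have heq' : τ'.clusters = (τ.clusters \ {P}) ∪ {B ∪ C} := by rw [heq, hAunB]
  -- B ∪ C is not a cluster of τ (would violate laminarity against P)
  have hBCnot : B ∪ C ∉ τ.clusters := by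
    intro hmem
    rcases τ.laminar (B ∪ C) hmem P hPc with h1 | h1 | h1
    · have hsub : C ⊆ P := (Finset.subset_union_right).trans h1
      obtain ⟨x, hx⟩ := hCnon
      exact Finset.disjoint_left.mp hCP hx (hsub hx)
    · obtain ⟨x, hx⟩ := hAnon
      rcases Finset.mem_union.mp (h1 (hAP.subset hx)) with h2 | h2
      · exact Finset.disjoint_left.mp hAB hx h2
      · exact Finset.disjoint_left.mp hAC hx h2
    · obtain ⟨x, hx⟩ := hBnon
      exact Finset.disjoint_left.mp h1 (Finset.mem_union_left _ hx) (hBP hx)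
  have hPneBC : P ≠ B ∪ C := fun hc => hBCnot (hc ▸ hPc)
  have hAneP : A ≠ P := hAP.ne
  have hBneP : B ≠ P := by
    intro hc
    obtain ⟨x, hx⟩ := hAnon
    have : x ∈ B := hc ▸ hAP.subset hx
    exact Finset.disjoint_left.mp hAB hx this
  have hCneP : C ≠ P := by
    intro hc
    obtain ⟨x, hx⟩ := hCnon
    exact Finset.disjoint_left.mp hCP hx (hc ▸ hx)
  have hmem' : ∀ K, K ∈ τ'.clusters ↔ (K ∈ τ.clusters ∧ K ≠ P) ∨ K = B ∪ C := by
    intro K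
    rw [heq']
    simp [Finset.mem_union, Finset.mem_sdiff]
    exact or_comm
  refine ⟨A, B, C, hAB, hAC, hBC, hA, ?_, hBc, ?_, hCc, ?_, ?_, ?_⟩
  · exact (hmem' A).mpr (Or.inl ⟨hA, hAneP⟩)
  · exact (hmem' B).mpr (Or.inl ⟨hBc, hBneP⟩)
  · exact (hmem' C).mpr (Or.inl ⟨hCc, hCneP⟩)
  · rw [hAunB]
    ext K
    simp only [Finset.mem_sdiff, Finset.mem_singleton, hmem']
    constructor
    · rintro ⟨hK, hK'⟩
      by_contra hne
      exact hK' (Or.inl ⟨hK, hne⟩)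
    · rintro rfl
      refine ⟨hPc, ?_⟩
      rintro (⟨_, h2⟩ | h2)
      · exact h2 rfl
      · exact hPneBC h2
  · ext K
    simp only [Finset.mem_sdiff, Finset.mem_singleton, hmem']
    constructor
    · rintro ⟨hK | hK, hK'⟩
      · exact absurd hK.1 hK'
      · exact hK
    · rintro rfl
      exact ⟨Or.inr rfl, hBCnot⟩


/-- distinct NNI-adjacent hierarchies determine a unique NNI-triplet
`(A, B, C)` of pairwise disjoint common clusters with
`C(τ₁) \ C(τ₂) = {A ∪ B}` and `C(τ₂) \ C(τ₁) = {B ∪ C}`. -/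
theorem nni_triplet_exists_unique (τ₁ τ₂ : BinaryHierarchy J)
    (hne : τ₁.clusters ≠ τ₂.clusters) (hadj : NNIAdjacent τ₁ τ₂) :
    ∃! T : Finset J × Finset J × Finset J,
      Disjoint T.1 T.2.1 ∧ Disjoint T.1 T.2.2 ∧ Disjoint T.2.1 T.2.2 ∧
      T.1 ∈ τ₁.clusters ∧ T.1 ∈ τ₂.clusters ∧
      T.2.1 ∈ τ₁.clusters ∧ T.2.1 ∈ τ₂.clusters ∧
      T.2.2 ∈ τ₁.clusters ∧ T.2.2 ∈ τ₂.clusters ∧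
      τ₁.clusters \ τ₂.clusters = {T.1 ∪ T.2.1} ∧
      τ₂.clusters \ τ₁.clusters = {T.2.1 ∪ T.2.2} := by
  have hex : ∃ A B C : Finset J, Disjoint A B ∧ Disjoint A C ∧ Disjoint B C ∧
      A ∈ τ₁.clusters ∧ A ∈ τ₂.clusters ∧ B ∈ τ₁.clusters ∧ B ∈ τ₂.clusters ∧
      C ∈ τ₁.clusters ∧ C ∈ τ₂.clusters ∧
      τ₁.clusters \ τ₂.clusters = {A ∪ B} ∧ τ₂.clusters \ τ₁.clusters = {B ∪ C} := by
    rcases hadj with h | h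
    · exact nni_move_triplet h
    · obtain ⟨A, B, C, hAB, hAC, hBC, hA1, hA2, hB1, hB2, hC1, hC2, h12, h21⟩ :=
        nni_move_triplet h
      exact ⟨C, B, A, hBC.symm, hAC.symm, hAB.symm, hC2, hC1, hB2, hB1, hA2, hA1,
        by rw [h21, Finset.union_comm], by rw [h12, Finset.union_comm]⟩
  obtain ⟨A, B, C, hAB, hAC, hBC, hA1, hA2, hB1, hB2, hC1, hC2, h12, h21⟩ := hex
  refine ⟨(A, B, C), ⟨hAB, hAC, hBC, hA1, hA2, hB1, hB2, hC1, hC2, h12, h21⟩, ?_⟩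
  rintro ⟨A', B', C'⟩ ⟨hAB', hAC', hBC', _, _, _, _, _, _, h12', h21'⟩
  dsimp only at hAB' hAC' hBC' h12' h21'
  have hU1 : A' ∪ B' = A ∪ B := Finset.singleton_injective (h12' ▸ h12)
  have hU2 : B' ∪ C' = B ∪ C := Finset.singleton_injective (h21' ▸ h21)
  have hB' : B' = B := by
    have e1 := inter_eq_middle hAB' hAC' hBC'
    have e2 := inter_eq_middle hAB hAC hBC
    rw [hU1, hU2] at e1
    rw [← e1, e2]
  have hA' : A' = A := by
    have : (A' ∪ B') \ B' = (A ∪ B) \ B := by rw [hU1, hB']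
    rwa [Finset.union_sdiff_cancel_right hAB', Finset.union_sdiff_cancel_right hAB] at this
  have hC' : C' = C := by
    have : (B' ∪ C') \ B' = (B ∪ C) \ B := by rw [hU2, hB']
    rwa [Finset.union_sdiff_cancel_left hBC', Finset.union_sdiff_cancel_left hBC] at this
  simp [hA', hB', hC']
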